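/- (Theorem 3.1, existence, uniqueness and boundness of the generalized Boltzmann distribution.) Fix M ≥ 1, v₀ > 0, ionic volumes v_i > 0, valences z_i ∈ ℝ, β > 0, e > 0, and bulk concentrations c_i^∞ > 0 (i = 1,…,M) with γ^∞ := 1 − Σ_{j=1}^M v_j c_j^∞ ∈ (0,1). Then for every ψ ∈ ℝ there exists a unique vector (c_1,…,c_M) with c_i > 0 for all i and 1 − Σ_{j=1}^M v_j c_j > 0 satisfying the equilibrium conditions β z_i e ψ + log(c_i/c_i^∞) − (v_i/v₀) log((1 − Σ_{j=1}^M v_j c_j)/γ^∞) = 0 for all i = 1,…,M; moreover this unique solution satisfies 0 < c_i < 1/v_i for every i and 1 − Σ_{j=1}^M v_j c_j < 1. -/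

import Mathlib

open scoped BigOperators

/-- Theorem 3.1, existence, uniqueness and boundness of the generalized
Boltzmann distribution: for every `ψ ∈ ℝ` there exists a unique vector `(c₁,…,c_M)`
with `cᵢ > 0` and `1 − ∑ vⱼ cⱼ > 0` satisfying the equilibrium conditions
`β zᵢ e ψ + log(cᵢ/cᵢ^∞) − (vᵢ/v₀) log((1 − ∑ vⱼ cⱼ)/γ^∞) = 0` for all `i`;
moreover this unique solution satisfies `0 < cᵢ < 1/vᵢ` and `1 − ∑ vⱼ cⱼ < 1`. -/
theorem generalized_Boltzmann_exists_unique_bounded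
    (M : ℕ) (hM : 1 ≤ M) (v₀ : ℝ) (hv₀ : 0 < v₀)
    (v z cinf : Fin M → ℝ) (hv : ∀ i, 0 < v i)
    (β e : ℝ) (hβ : 0 < β) (he : 0 < e)
    (hcinf : ∀ i, 0 < cinf i) (hsum : ∑ j, v j * cinf j < 1) (ψ : ℝ) :
    (∃! c : Fin M → ℝ,
      (∀ i, 0 < c i) ∧ 0 < 1 - ∑ j, v j * c j ∧
      ∀ i, β * z i * e * ψ + Real.log (c i / cinf i) -
        v i / v₀ * Real.log ((1 - ∑ j, v j * c j) / (1 - ∑ j, v j * cinf j)) = 0) ∧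
    (∀ c : Fin M → ℝ,
      ((∀ i, 0 < c i) ∧ 0 < 1 - ∑ j, v j * c j ∧
       ∀ i, β * z i * e * ψ + Real.log (c i / cinf i) -
         v i / v₀ * Real.log ((1 - ∑ j, v j * c j) / (1 - ∑ j, v j * cinf j)) = 0) →
      (∀ i, 0 < c i ∧ c i < 1 / v i) ∧ 1 - ∑ j, v j * c j < 1) := by
  have hne : (Finset.univ : Finset (Fin M)).Nonempty := by
    have : Nonempty (Fin M) := ⟨⟨0, hM⟩⟩
    exact Finset.univ_nonempty
  set γinf : ℝ := 1 - ∑ j, v j * cinf j with hγinf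
  have hγinfpos : 0 < γinf := by simp [hγinf]; linarith
  set a : Fin M → ℝ := fun i => cinf i * Real.exp (-(β * z i * e * ψ)) with ha
  have hapos : ∀ i, 0 < a i := fun i => mul_pos (hcinf i) (Real.exp_pos _)
  set h : ℝ → ℝ := fun t => γinf * Real.exp t + ∑ j, v j * (a j * Real.exp (v j / v₀ * t)) - 1 with hh
  have hvv : ∀ j, 0 < v j / v₀ := fun j => div_pos (hv j) hv₀
  have hmono : StrictMono h := by
    have h1 : StrictMono fun t => γinf * Real.exp t :=
      fun s t hst => by
        exact mul_lt_mul_of_pos_left (Real.exp_lt_exp.2 hst) hγinfpos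
    have h2 : Monotone fun t => ∑ j, v j * (a j * Real.exp (v j / v₀ * t)) := by
      intro s t hst
      apply Finset.sum_le_sum fun j _ => ?_
      have h3 : Real.exp (v j / v₀ * s) ≤ Real.exp (v j / v₀ * t) :=
        Real.exp_le_exp.2 (mul_le_mul_of_nonneg_left hst (hvv j).le)
      have h4 := mul_le_mul_of_nonneg_left h3 (hapos j).le
      exact mul_le_mul_of_nonneg_left h4 (hv j).le
    intro s t hst
    have := add_lt_add_of_lt_of_le (h1 hst) (h2 hst.le)
    simpa [hh] using sub_lt_sub_right this 1
  have hcont : Continuous h := by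
    apply Continuous.sub ?_ continuous_const
    apply Continuous.add
    · exact continuous_const.mul Real.continuous_exp
    · exact continuous_finset_sum _ fun j _ =>
        continuous_const.mul (continuous_const.mul (Real.continuous_exp.comp (continuous_const.mul continuous_id)))
  -- existence of a root of h
  set S : ℝ := γinf + ∑ j, v j * a j with hS
  have hSpos : 0 < S := by
    have : 0 < ∑ j, v j * a j :=
      Finset.sum_pos (fun j _ => mul_pos (hv j) (hapos j)) hne
    positivity
  set m : ℝ := min 1 (Finset.univ.inf' hne fun j => v j / v₀) with hm
  have hmpos : 0 < m := by
    apply lt_min one_pos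
    exact (Finset.lt_inf'_iff _).2 fun j _ => hvv j
  have hm1 : m ≤ 1 := min_le_left _ _
  have hmle : ∀ j, m ≤ v j / v₀ := fun j =>
    le_trans (min_le_right _ _) (Finset.inf'_le _ (Finset.mem_univ j))
  set r : ℝ := min (1/2) (1/(2*S)) with hr
  have hrpos : 0 < r := lt_min (by norm_num) (by positivity)
  have hrle : r ≤ 1/2 := min_le_left _ _
  set t₁ : ℝ := m⁻¹ * Real.log r with ht₁
  have hmt₁ : m * t₁ = Real.log r := by
    rw [ht₁, ← mul_assoc, mul_inv_cancel₀ hmpos.ne', one_mul]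
  have ht₁neg : t₁ ≤ 0 := by
    have : Real.log r ≤ 0 := Real.log_nonpos hrpos.le (by linarith)
    have := mul_nonpos_of_nonneg_of_nonpos (inv_nonneg.2 hmpos.le) this
    simpa [ht₁] using this
  have hexpmt₁ : Real.exp (m * t₁) = r := by rw [hmt₁, Real.exp_log hrpos]
  have hht₁ : h t₁ < 0 := by
    have hb1 : Real.exp t₁ ≤ r := by
      rw [← hexpmt₁]
      apply Real.exp_le_exp.2
      nlinarith
    have hb2 : ∀ j, Real.exp (v j / v₀ * t₁) ≤ r := fun j => by
      rw [← hexpmt₁]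
      apply Real.exp_le_exp.2
      nlinarith [hmle j, hvv j]
    have hsumle : ∑ j, v j * (a j * Real.exp (v j / v₀ * t₁)) ≤ ∑ j, v j * (a j * r) := by
      apply Finset.sum_le_sum fun j _ => ?_
      have := mul_le_mul_of_nonneg_left (hb2 j) (hapos j).le
      exact mul_le_mul_of_nonneg_left this (hv j).le
    have h1 : γinf * Real.exp t₁ ≤ γinf * r := mul_le_mul_of_nonneg_left hb1 hγinfpos.le
    have h2 : ∑ j, v j * (a j * r) = (∑ j, v j * a j) * r := by
      rw [Finset.sum_mul]; congr 1; funext j; ring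
    have hSr : S * r ≤ 1/2 := by
      have : r ≤ 1/(2*S) := min_le_right _ _
      calc S * r ≤ S * (1/(2*S)) := mul_le_mul_of_nonneg_left this hSpos.le
        _ = 1/2 := by field_simp
    have hexpand : h t₁ = γinf * Real.exp t₁ + (∑ j, v j * (a j * Real.exp (v j / v₀ * t₁))) - 1 := rfl
    have hSr' : S * r = γinf * r + (∑ j, v j * a j) * r := by rw [hS]; ring
    clear_value h γinf a S m r t₁
    linarith [h1, hsumle, h2, hSr', hSr]
  set t₂ : ℝ := -Real.log γinf with ht₂
  have hγinf1 : γinf < 1 := by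
    have : 0 < ∑ j, v j * cinf j :=
      Finset.sum_pos (fun j _ => mul_pos (hv j) (hcinf j)) hne
    simp [hγinf]; linarith
  have ht₂pos : 0 < t₂ := by
    have := Real.log_neg hγinfpos hγinf1
    simp only [ht₂]
    linarith
  have hht₂ : 0 < h t₂ := by
    have : Real.exp t₂ = γinf⁻¹ := by
      rw [ht₂, Real.exp_neg, Real.exp_log hγinfpos]
    have h1 : γinf * Real.exp t₂ = 1 := by
      rw [this]; field_simp
    have h2 : 0 < ∑ j, v j * (a j * Real.exp (v j / v₀ * t₂)) :=
      Finset.sum_pos (fun j _ => mul_pos (hv j) (mul_pos (hapos j) (Real.exp_pos _))) hne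
    have hexpand : h t₂ = γinf * Real.exp t₂ + (∑ j, v j * (a j * Real.exp (v j / v₀ * t₂))) - 1 := rfl
    clear_value h γinf a t₂
    linarith
  obtain ⟨t, _, ht⟩ : ∃ t ∈ Set.Icc t₁ t₂, h t = 0 := by
    have := intermediate_value_Icc (by linarith : t₁ ≤ t₂) hcont.continuousOn
    exact this ⟨hht₁.le, hht₂.le⟩
  -- the canonical solution
  set c : Fin M → ℝ := fun i => a i * Real.exp (v i / v₀ * t) with hc
  have hcpos : ∀ i, 0 < c i := fun i => mul_pos (hapos i) (Real.exp_pos _)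
  have hsumc : ∑ j, v j * c j = 1 - γinf * Real.exp t := by
    have hexpand : h t = γinf * Real.exp t + (∑ j, v j * (a j * Real.exp (v j / v₀ * t))) - 1 := rfl
    have hceq : ∑ j, v j * c j = ∑ j, v j * (a j * Real.exp (v j / v₀ * t)) := rfl
    rw [hceq]
    rw [hexpand] at ht
    linarith
  have hγc : 0 < 1 - ∑ j, v j * c j := by
    rw [hsumc]
    have : 0 < γinf * Real.exp t := mul_pos hγinfpos (Real.exp_pos _)
    linarith
  have hratio : (1 - ∑ j, v j * c j) / γinf = Real.exp t := by
    rw [hsumc]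
    field_simp
    ring
  have heqs : ∀ i, β * z i * e * ψ + Real.log (c i / cinf i) -
      v i / v₀ * Real.log ((1 - ∑ j, v j * c j) / (1 - ∑ j, v j * cinf j)) = 0 := by
    intro i
    have h1 : c i / cinf i = Real.exp (-(β * z i * e * ψ)) * Real.exp (v i / v₀ * t) := by
      show a i * Real.exp (v i / v₀ * t) / cinf i = _
      rw [ha]
      field_simp [(hcinf i).ne']
    have h2 : Real.log (c i / cinf i) = -(β * z i * e * ψ) + v i / v₀ * t := by
      rw [h1, ← Real.exp_add, Real.log_exp]
    have h3 : Real.log ((1 - ∑ j, v j * c j) / (1 - ∑ j, v j * cinf j)) = t := by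
      have : (1 - ∑ j, v j * cinf j) = γinf := hγinf.symm
      rw [this, hratio, Real.log_exp]
    rw [h2, h3]; ring
  -- uniqueness argument as a lemma
  have huniq : ∀ c' : Fin M → ℝ,
      ((∀ i, 0 < c' i) ∧ 0 < 1 - ∑ j, v j * c' j ∧
       ∀ i, β * z i * e * ψ + Real.log (c' i / cinf i) -
         v i / v₀ * Real.log ((1 - ∑ j, v j * c' j) / (1 - ∑ j, v j * cinf j)) = 0) →
      c' = c := by
    rintro c' ⟨hc'pos, hγ'pos, heq'⟩
    set γ' : ℝ := 1 - ∑ j, v j * c' j with hγ'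
    set t' : ℝ := Real.log (γ' / γinf) with ht'
    have hexp' : Real.exp t' = γ' / γinf := Real.exp_log (div_pos hγ'pos hγinfpos)
    have hc'eq : ∀ i, c' i = a i * Real.exp (v i / v₀ * t') := by
      intro i
      have h0 := heq' i
      have hlog : Real.log (c' i / cinf i) = -(β * z i * e * ψ) + v i / v₀ * t' := by
        linarith
      have := congrArg Real.exp hlog
      rw [Real.exp_log (div_pos (hc'pos i) (hcinf i)), Real.exp_add] at this
      have : c' i = cinf i * (Real.exp (-(β * z i * e * ψ)) * Real.exp (v i / v₀ * t')) := by
        rw [div_eq_iff (hcinf i).ne'] at this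
        rw [this]; ring
      rw [this]; simp only [ha]; ring
    have hht' : h t' = 0 := by
      simp only [hh]
      have h1 : γinf * Real.exp t' = γ' := by
        rw [hexp']; field_simp
      have h2 : ∑ j, v j * (a j * Real.exp (v j / v₀ * t')) = ∑ j, v j * c' j := by
        apply Finset.sum_congr rfl fun j _ => by rw [hc'eq j]
      rw [h1, h2]
      have : γ' = 1 - ∑ j, v j * c' j := hγ'
      linarith
    have htt : t' = t := hmono.injective (by rw [hht', ht])
    funext i
    rw [hc'eq i, htt]
  refine ⟨⟨c, ⟨hcpos, hγc, heqs⟩, fun c' hc' => huniq c' hc'⟩, ?_⟩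
  rintro c' ⟨hc'pos, hγ'pos, _⟩
  have hsumpos : 0 < ∑ j, v j * c' j :=
    Finset.sum_pos (fun j _ => mul_pos (hv j) (hc'pos j)) hne
  refine ⟨fun i => ⟨hc'pos i, ?_⟩, by linarith⟩
  have hle : v i * c' i ≤ ∑ j, v j * c' j :=
    Finset.single_le_sum (fun j _ => (mul_pos (hv j) (hc'pos j)).le) (Finset.mem_univ i)
  rw [lt_div_iff₀ (hv i)]
  linarith
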